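/- Consider the general SIWS model. Then: (i) every solution with z(0) ∈ D̄ satisfies z(t) ∈ D̄ for all t ≥ 0; (ii) every solution with z(0) ∈ 𝐃 satisfies z(t) ∈ 𝐃 for all t ≥ 0; (iii) G(0) = 0, and every equilibrium belonging to D̄ but not to 𝐃 is equal to 0. -/

import Mathlib

open Matrix Filter Topology MeasureTheory

noncomputable section

/-- `Z(z) = diag(z_1,…,z_n,0,…,0)`. -/
def Zmat (n : ℕ) {N : ℕ} (z : Fin N → ℝ) : Matrix (Fin N) (Fin N) ℝ :=
  Matrix.diagonal fun i => if (i : ℕ) < n then z i else 0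

/-- `H(z)_i = zᵀ B_{fi} z`. -/
def Hquad {N : ℕ} (Bfi : Fin N → Matrix (Fin N) (Fin N) ℝ) (z : Fin N → ℝ) : Fin N → ℝ :=
  fun i => z ⬝ᵥ (Bfi i).mulVec z

/-- The higher-order SIWS vector field `G(z) = -D_f z + (I - Z(z)) (B_f z + H(z))`. -/
def Gfield (n : ℕ) {N : ℕ} (Df Bf : Matrix (Fin N) (Fin N) ℝ)
    (Bfi : Fin N → Matrix (Fin N) (Fin N) ℝ) (z : Fin N → ℝ) : Fin N → ℝ :=
  -(Df.mulVec z) + (1 - Zmat n z).mulVec (Bf.mulVec z + Hquad Bfi z)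

/-- Upper bound vector: `1` on the first `n` coordinates, `w_{j,max}` on the rest. -/
def ubound (n : ℕ) {N : ℕ} (Df Bf : Matrix (Fin N) (Fin N) ℝ)
    (Bfi : Fin N → Matrix (Fin N) (Fin N) ℝ) (i : Fin N) : ℝ :=
  if (i : ℕ) < n then 1 else (∑ q, Bf i q + ∑ p, ∑ q, Bfi i p q) / Df i i

/-- The closed domain `D̄`. -/
def Dbar (n : ℕ) {N : ℕ} (Df Bf : Matrix (Fin N) (Fin N) ℝ)
    (Bfi : Fin N → Matrix (Fin N) (Fin N) ℝ) : Set (Fin N → ℝ) :=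
  {z | ∀ i, 0 ≤ z i ∧ z i ≤ ubound n Df Bf Bfi i}

/-- The open domain `𝐃`. -/
def Dint (n : ℕ) {N : ℕ} (Df Bf : Matrix (Fin N) (Fin N) ℝ)
    (Bfi : Fin N → Matrix (Fin N) (Fin N) ℝ) : Set (Fin N → ℝ) :=
  {z | ∀ i, 0 < z i ∧ z i < ubound n Df Bf Bfi i}

/-- A solution of `z' = G(z)` on `[0,∞)`. -/
def IsSolution {N : ℕ} (G : (Fin N → ℝ) → (Fin N → ℝ)) (z : ℝ → Fin N → ℝ) : Prop :=
  ∀ t : ℝ, 0 ≤ t → HasDerivAt z (G (z t)) t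

/-- Irreducibility of a (nonnegative) square matrix. -/
def Irred {N : ℕ} (M : Matrix (Fin N) (Fin N) ℝ) : Prop :=
  ∀ i j : Fin N, i ≠ j → ∃ (r : ℕ) (k : ℕ → Fin N),
    k 0 = i ∧ k r = j ∧ ∀ s, s < r → 0 < M (k s) (k (s + 1))

/-- Spectral radius: maximum modulus of the complex eigenvalues. -/
def specRad {N : ℕ} (M : Matrix (Fin N) (Fin N) ℝ) : ℝ :=
  sSup {r : ℝ | ∃ μ : ℂ, (M.map fun x : ℝ => (x : ℂ)).charpoly.IsRoot μ ∧ r = ‖μ‖}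

/-- Spectral abscissa: maximum real part of the complex eigenvalues. -/
def specAbs {N : ℕ} (M : Matrix (Fin N) (Fin N) ℝ) : ℝ :=
  sSup {r : ℝ | ∃ μ : ℂ, (M.map fun x : ℝ => (x : ℂ)).charpoly.IsRoot μ ∧ r = μ.re}

/-- A matrix is Hurwitz if every eigenvalue has negative real part. -/
def IsHurwitz {N : ℕ} (M : Matrix (Fin N) (Fin N) ℝ) : Prop :=
  ∀ μ : ℂ, (M.map fun x : ℝ => (x : ℂ)).charpoly.IsRoot μ → μ.re < 0

/-- Euclidean norm on `ℝ^N`. -/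
def eucNorm {N : ℕ} (v : Fin N → ℝ) : ℝ := Real.sqrt (∑ i, v i ^ 2)

/-- Euclidean norm on a pair of vectors (concatenation). -/
def eucNorm2 {N : ℕ} (v w : Fin N → ℝ) : ℝ := Real.sqrt (∑ i, v i ^ 2 + ∑ i, w i ^ 2)

/-- Jacobian matrix of a vector field at a point. -/
def jacobian {N : ℕ} (G : (Fin N → ℝ) → (Fin N → ℝ)) (z : Fin N → ℝ) :
    Matrix (Fin N) (Fin N) ℝ :=
  Matrix.of fun i j => fderiv ℝ G z (Pi.single j 1) i

/-- Structural hypotheses of the higher-order SIWS model. -/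
structure ModelHyp (n : ℕ) {N : ℕ} (Df Bf : Matrix (Fin N) (Fin N) ℝ)
    (Bfi : Fin N → Matrix (Fin N) (Fin N) ℝ) : Prop where
  dDiag : ∀ i j, i ≠ j → Df i j = 0
  dPos : ∀ i, 0 < Df i i
  bNonneg : ∀ p q, 0 ≤ Bf p q
  bBlock : ∀ p q : Fin N, n ≤ (p : ℕ) → n ≤ (q : ℕ) → Bf p q = 0
  bfiNonneg : ∀ i p q, 0 ≤ Bfi i p q
  bfiBlock1 : ∀ i : Fin N, (i : ℕ) < n → ∀ p q : Fin N, n ≤ (p : ℕ) → n ≤ (q : ℕ) →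
    Bfi i p q = 0
  bfiBlock2 : ∀ i : Fin N, n ≤ (i : ℕ) → ∀ p q : Fin N, ¬((p : ℕ) < n ∧ (q : ℕ) < n) →
    Bfi i p q = 0

/-- Bi-virus vector field for one virus:
`G^ν(z, zo) = -D_f^ν z + (I - Z(z) - Z(zo)) (B_f^ν z + H^ν(z))`. -/
def GBi (n : ℕ) {N : ℕ} (Df Bf : Matrix (Fin N) (Fin N) ℝ)
    (Bfi : Fin N → Matrix (Fin N) (Fin N) ℝ) (z zo : Fin N → ℝ) : Fin N → ℝ :=
  -(Df.mulVec z) + (1 - Zmat n z - Zmat n zo).mulVec (Bf.mulVec z + Hquad Bfi z)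

/-- A solution of the bi-virus dynamics on `[0,∞)`. -/
def IsSolutionBi (n : ℕ) {N : ℕ} (Df1 Bf1 : Matrix (Fin N) (Fin N) ℝ)
    (Bfi1 : Fin N → Matrix (Fin N) (Fin N) ℝ) (Df2 Bf2 : Matrix (Fin N) (Fin N) ℝ)
    (Bfi2 : Fin N → Matrix (Fin N) (Fin N) ℝ) (z1 z2 : ℝ → Fin N → ℝ) : Prop :=
  ∀ t : ℝ, 0 ≤ t →
    HasDerivAt z1 (GBi n Df1 Bf1 Bfi1 (z1 t) (z2 t)) t ∧
    HasDerivAt z2 (GBi n Df2 Bf2 Bfi2 (z2 t) (z1 t)) t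

/-- Membership in the bi-virus domain `D̄_bi`. -/
def InDbarBi (n : ℕ) {N : ℕ} (Df1 Bf1 : Matrix (Fin N) (Fin N) ℝ)
    (Bfi1 : Fin N → Matrix (Fin N) (Fin N) ℝ) (Df2 Bf2 : Matrix (Fin N) (Fin N) ℝ)
    (Bfi2 : Fin N → Matrix (Fin N) (Fin N) ℝ) (z1 z2 : Fin N → ℝ) : Prop :=
  z1 ∈ Dbar n Df1 Bf1 Bfi1 ∧ z2 ∈ Dbar n Df2 Bf2 Bfi2 ∧
    ∀ i : Fin N, (i : ℕ) < n → z1 i + z2 i ≤ 1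

/-- The vector `𝟙` : first `n` coordinates equal `1`, the rest `0`. -/
def onevec (n : ℕ) {N : ℕ} : Fin N → ℝ := fun i => if (i : ℕ) < n then 1 else 0

/-- The general SIWS vector field. -/
def Ggen (n : ℕ) {N : ℕ} (Df : Matrix (Fin N) (Fin N) ℝ)
    (F H : (Fin N → ℝ) → (Fin N → ℝ)) (z : Fin N → ℝ) : Fin N → ℝ := fun i =>
  if (i : ℕ) < n then -(Df i i * z i) + (1 - z i) * (F z i + H z i)
  else -(Df i i * z i) + (F z i + H z i)

/-- Upper bound vector for the general SIWS model. -/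
def uboundGen (n : ℕ) {N : ℕ} (Df : Matrix (Fin N) (Fin N) ℝ)
    (F H : (Fin N → ℝ) → (Fin N → ℝ)) (i : Fin N) : ℝ :=
  if (i : ℕ) < n then 1 else (F (onevec n) i + H (onevec n) i) / Df i i

def DbarGen (n : ℕ) {N : ℕ} (Df : Matrix (Fin N) (Fin N) ℝ)
    (F H : (Fin N → ℝ) → (Fin N → ℝ)) : Set (Fin N → ℝ) :=
  {z | ∀ i, 0 ≤ z i ∧ z i ≤ uboundGen n Df F H i}

def DintGen (n : ℕ) {N : ℕ} (Df : Matrix (Fin N) (Fin N) ℝ)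
    (F H : (Fin N → ℝ) → (Fin N → ℝ)) : Set (Fin N → ℝ) :=
  {z | ∀ i, 0 < z i ∧ z i < uboundGen n Df F H i}

/-- Structural hypotheses of the general SIWS model. -/
structure GenHyp (n : ℕ) {N : ℕ} (Df : Matrix (Fin N) (Fin N) ℝ)
    (F H : (Fin N → ℝ) → (Fin N → ℝ)) : Prop where
  dDiag : ∀ i j, i ≠ j → Df i j = 0
  dPos : ∀ i, 0 < Df i i
  fSmooth : ContDiff ℝ 1 F
  hSmooth : ContDiff ℝ 1 H
  fZero : F 0 = 0
  hZero : H 0 = 0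
  fDep : ∀ i : Fin N, n ≤ (i : ℕ) → ∀ z z' : Fin N → ℝ,
    (∀ j : Fin N, (j : ℕ) < n → z j = z' j) → F z i = F z' i
  hDep : ∀ i : Fin N, n ≤ (i : ℕ) → ∀ z z' : Fin N → ℝ,
    (∀ j : Fin N, (j : ℕ) < n → z j = z' j) → H z i = H z' i
  fMono : ∀ (z : Fin N → ℝ) (i j : Fin N), 0 ≤ fderiv ℝ F z (Pi.single j 1) i
  hMono : ∀ (z : Fin N → ℝ) (i j : Fin N), 0 ≤ fderiv ℝ H z (Pi.single j 1) i
  hJacZero : fderiv ℝ H 0 = 0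
  edgeHyp : ∃ E : Set (Fin N × Fin N),
    (∀ e ∈ E, e.1 ≠ e.2) ∧
    (∀ i j : Fin N, i ≠ j → ∃ (r : ℕ) (k : ℕ → Fin N),
      k 0 = i ∧ k r = j ∧ ∀ s, s < r → (k s, k (s + 1)) ∈ E) ∧
    (∀ (z : Fin N → ℝ), ∀ e ∈ E, 0 < fderiv ℝ F z (Pi.single e.2 1) e.1)

/-- The perturbed SIWS vector field `G_ε(z) = -D_f z + (I - Z(z)) (B_f z + ε H(z))`. -/
def Gpert (n : ℕ) {N : ℕ} (Df Bf : Matrix (Fin N) (Fin N) ℝ)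
    (H : (Fin N → ℝ) → (Fin N → ℝ)) (ε : ℝ) (z : Fin N → ℝ) : Fin N → ℝ :=
  -(Df.mulVec z) + (1 - Zmat n z).mulVec (Bf.mulVec z + ε • H z)


section stmt15helpers

open Set

variable {N : ℕ}

private lemma fderiv_pi_apply_eq_sum' {F : (Fin N → ℝ) → (Fin N → ℝ)}
    (p v : Fin N → ℝ) (i : Fin N) :
    fderiv ℝ F p v i = ∑ j, v j * fderiv ℝ F p (Pi.single j 1) i := by
  have hv : v = ∑ j, v j • (Pi.single j 1 : Fin N → ℝ) := by
    conv_lhs => rw [pi_eq_sum_univ v]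
    refine Finset.sum_congr rfl fun j _ => ?_
    congr 1
    ext l
    simp [Pi.single_apply, eq_comm]
  conv_lhs => rw [hv]
  rw [map_sum]
  simp [Finset.sum_apply]

private lemma line_hasDerivAt' {F : (Fin N → ℝ) → (Fin N → ℝ)} (hF : ContDiff ℝ 1 F)
    (a v : Fin N → ℝ) (i : Fin N) (t : ℝ) :
    HasDerivAt (fun s : ℝ => F (a + s • v) i)
      (∑ j, v j * fderiv ℝ F (a + t • v) (Pi.single j 1) i) t := by
  have hc : HasDerivAt (fun s : ℝ => a + s • v) v t := by
    simpa using ((hasDerivAt_id t).smul_const v).const_add a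
  have hdF := ((hF.differentiable one_ne_zero) (a + t • v)).hasFDerivAt
  have h1 : HasDerivAt (fun s : ℝ => F (a + s • v)) (fderiv ℝ F (a + t • v) v) t :=
    hdF.comp_hasDerivAt t hc
  have h2 := (ContinuousLinearMap.proj (R := ℝ) (φ := fun _ : Fin N => ℝ)
    i).hasFDerivAt.comp_hasDerivAt t h1
  rw [← fderiv_pi_apply_eq_sum']
  exact h2

private lemma mono_of_partials {F : (Fin N → ℝ) → (Fin N → ℝ)} (hF : ContDiff ℝ 1 F)
    (mono : ∀ (z : Fin N → ℝ) (i j : Fin N), 0 ≤ fderiv ℝ F z (Pi.single j 1) i)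
    {a b : Fin N → ℝ} (hab : ∀ j, a j ≤ b j) (i : Fin N) : F a i ≤ F b i := by
  set g : ℝ → ℝ := fun s => F (a + s • (b - a)) i with hg
  have hd : ∀ t : ℝ, HasDerivAt g
      (∑ j, (b j - a j) * fderiv ℝ F (a + t • (b - a)) (Pi.single j 1) i) t := by
    intro t
    simpa using line_hasDerivAt' hF a (b - a) i t
  have hmono : MonotoneOn g (Icc (0:ℝ) 1) := by
    apply monotoneOn_of_deriv_nonneg (convex_Icc 0 1)
      (fun t _ => (hd t).continuousAt.continuousWithinAt)
      (fun t _ => ((hd t).differentiableAt).differentiableWithinAt)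
    intro t _
    rw [(hd t).deriv]
    exact Finset.sum_nonneg fun j _ => mul_nonneg (by linarith [hab j]) (mono _ i j)
  have h0 : g 0 = F a i := by simp [hg]
  have h1 : g 1 = F b i := by simp [hg]
  calc F a i = g 0 := h0.symm
    _ ≤ g 1 := hmono (by simp) (by simp) zero_le_one
    _ = F b i := h1

private lemma strict_mono_of_partials {F : (Fin N → ℝ) → (Fin N → ℝ)} (hF : ContDiff ℝ 1 F)
    (mono : ∀ (z : Fin N → ℝ) (i j : Fin N), 0 ≤ fderiv ℝ F z (Pi.single j 1) i)
    {a b : Fin N → ℝ} (hab : ∀ j, a j ≤ b j) (i j₀ : Fin N) (hj : a j₀ < b j₀)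
    (hpos : ∀ p : Fin N → ℝ, 0 < fderiv ℝ F p (Pi.single j₀ 1) i) : F a i < F b i := by
  set g : ℝ → ℝ := fun s => F (a + s • (b - a)) i with hg
  have hd : ∀ t : ℝ, HasDerivAt g
      (∑ j, (b j - a j) * fderiv ℝ F (a + t • (b - a)) (Pi.single j 1) i) t := by
    intro t
    simpa using line_hasDerivAt' hF a (b - a) i t
  have hmono : StrictMonoOn g (Icc (0:ℝ) 1) := by
    apply strictMonoOn_of_deriv_pos (convex_Icc 0 1)
      (fun t _ => (hd t).continuousAt.continuousWithinAt)
    intro t _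
    rw [(hd t).deriv]
    refine Finset.sum_pos' (fun j _ => mul_nonneg (by linarith [hab j]) (mono _ i j))
      ⟨j₀, Finset.mem_univ _, mul_pos (by linarith) (hpos _)⟩
  have h0 : g 0 = F a i := by simp [hg]
  have h1 : g 1 = F b i := by simp [hg]
  calc F a i = g 0 := h0.symm
    _ < g 1 := hmono (by simp) (by simp) zero_lt_one
    _ = F b i := h1

private lemma lip_of_partials {F : (Fin N → ℝ) → (Fin N → ℝ)} (hF : ContDiff ℝ 1 F)
    {a b : Fin N → ℝ} {M : ℝ} (i : Fin N)
    (hM : ∀ s ∈ Icc (0:ℝ) 1, ∀ j, |fderiv ℝ F (a + s • (b - a)) (Pi.single j 1) i| ≤ M) :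
    |F b i - F a i| ≤ M * ∑ j, |b j - a j| := by
  set g : ℝ → ℝ := fun s => F (a + s • (b - a)) i with hg
  set g' : ℝ → ℝ := fun t => ∑ j, (b j - a j) * fderiv ℝ F (a + t • (b - a)) (Pi.single j 1) i
    with hg'
  have hd : ∀ t : ℝ, HasDerivAt g (g' t) t := by
    intro t
    simpa using line_hasDerivAt' hF a (b - a) i t
  have hb : ∀ t ∈ Ico (0:ℝ) 1, ‖g' t‖ ≤ M * ∑ j, |b j - a j| := by
    intro t ht
    rw [Real.norm_eq_abs]
    calc |g' t| ≤ ∑ j, |(b j - a j) * fderiv ℝ F (a + t • (b - a)) (Pi.single j 1) i| :=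
          Finset.abs_sum_le_sum_abs _ _
      _ ≤ ∑ j, |b j - a j| * M := by
          refine Finset.sum_le_sum fun j _ => ?_
          rw [abs_mul]
          exact mul_le_mul_of_nonneg_left (hM t (Ico_subset_Icc_self ht) j) (abs_nonneg _)
      _ = M * ∑ j, |b j - a j| := by rw [← Finset.sum_mul, mul_comm]
  have key := norm_image_sub_le_of_norm_deriv_le_segment_01'
    (fun t _ => (hd t).hasDerivWithinAt) hb
  have h0 : g 0 = F a i := by simp [hg]
  have h1 : g 1 = F b i := by simp [hg]
  rw [h0, h1, Real.norm_eq_abs] at key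
  exact key

private lemma negpart_sq_hasDerivAt (x : ℝ) :
    HasDerivAt (fun y : ℝ => max 0 (-y) ^ 2) (-2 * max 0 (-x)) x := by
  rcases lt_trichotomy x 0 with hx | hx | hx
  · have h : (fun y : ℝ => max 0 (-y) ^ 2) =ᶠ[𝓝 x] fun y => y ^ 2 := by
      filter_upwards [eventually_lt_nhds hx] with y hy
      rw [max_eq_right (by linarith), neg_pow, pow_two, pow_two]
      ring
    have hsq : HasDerivAt (fun y : ℝ => y ^ 2) (2 * x) x := by
      simpa using (hasDerivAt_pow 2 x)
    refine (hsq.congr_of_eventuallyEq h).congr_deriv ?_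
    rw [max_eq_right (by linarith)]
    ring
  · subst hx
    rw [hasDerivAt_iff_isLittleO]
    rw [Asymptotics.isLittleO_iff]
    intro c hc
    filter_upwards [Metric.ball_mem_nhds (0:ℝ) hc] with y hy
    simp only [Metric.mem_ball, Real.dist_eq, sub_zero] at hy
    have h1 : max 0 (-y) ≤ |y| := by
      rcases le_or_gt 0 y with h | h
      · simpa [max_eq_left, neg_nonpos.mpr h] using abs_nonneg y
      · rw [max_eq_right (by linarith), abs_of_neg h]
    have habs : |max 0 (-y) ^ 2| ≤ |y| * |y| := by
      rw [abs_of_nonneg (sq_nonneg _), pow_two]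
      exact mul_le_mul h1 h1 (le_max_left _ _) (abs_nonneg _)
    simp only [neg_zero, max_self, mul_zero, zero_mul, sub_zero, smul_eq_mul,
      Real.norm_eq_abs]
    have h2 : |y| * |y| ≤ c * |y| := by nlinarith [abs_nonneg y]
    calc |max 0 (-y) ^ 2 - 0 ^ 2| = |max 0 (-y) ^ 2| := by norm_num
      _ ≤ |y| * |y| := habs
      _ ≤ c * |y| := h2
  · have h : (fun y : ℝ => max 0 (-y) ^ 2) =ᶠ[𝓝 x] fun _ => (0:ℝ) := by
      filter_upwards [eventually_gt_nhds hx] with y hy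
      rw [max_eq_left (by linarith)]
      norm_num
    have hc : HasDerivAt (fun _ : ℝ => (0:ℝ)) 0 x := hasDerivAt_const x 0
    refine (hc.congr_of_eventuallyEq h).congr_deriv ?_
    rw [max_eq_left (by linarith)]
    ring

private lemma pospart_sq_hasDerivAt (c x : ℝ) :
    HasDerivAt (fun y : ℝ => max 0 (y - c) ^ 2) (2 * max 0 (x - c)) x := by
  have h1 := negpart_sq_hasDerivAt (c - x)
  have h2 : HasDerivAt (fun y : ℝ => c - y) (-1 : ℝ) x := by
    simpa using (hasDerivAt_id x).const_sub c
  have h3 := h1.comp x h2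
  have he : ((fun y : ℝ => max 0 (-y) ^ 2) ∘ fun y : ℝ => c - y)
      = fun y : ℝ => max 0 (y - c) ^ 2 := by
    ext y
    simp [Function.comp, neg_sub]
  rw [he] at h3
  refine h3.congr_deriv ?_
  rw [neg_sub]
  ring

private lemma hasDerivAt_coord {z : ℝ → Fin N → ℝ} {v : Fin N → ℝ} {t : ℝ}
    (hz : HasDerivAt z v t) (i : Fin N) : HasDerivAt (fun s => z s i) (v i) t :=
  (ContinuousLinearMap.proj (R := ℝ) (φ := fun _ : Fin N => ℝ)
    i).hasFDerivAt.comp_hasDerivAt t hz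

private lemma nonneg_of_partials {F : (Fin N → ℝ) → (Fin N → ℝ)} (hF : ContDiff ℝ 1 F)
    (mono : ∀ (z : Fin N → ℝ) (i j : Fin N), 0 ≤ fderiv ℝ F z (Pi.single j 1) i)
    (h0 : F 0 = 0) {z : Fin N → ℝ} (hz : ∀ j, 0 ≤ z j) (i : Fin N) : 0 ≤ F z i := by
  have := mono_of_partials hF mono (a := 0) (b := z) (fun j => hz j) i
  rw [h0] at this
  simpa using this

private lemma tail_partial_zero {n : ℕ} {F : (Fin N → ℝ) → (Fin N → ℝ)}
    (hF : ContDiff ℝ 1 F)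
    (hdep : ∀ i : Fin N, n ≤ (i : ℕ) → ∀ z z' : Fin N → ℝ,
      (∀ j : Fin N, (j : ℕ) < n → z j = z' j) → F z i = F z' i)
    {i j : Fin N} (hi : n ≤ (i : ℕ)) (hj : n ≤ (j : ℕ)) (z : Fin N → ℝ) :
    fderiv ℝ F z (Pi.single j 1) i = 0 := by
  have hline := line_hasDerivAt' hF z (Pi.single j 1) i 0
  have hconst : (fun s : ℝ => F (z + s • (Pi.single j 1 : Fin N → ℝ)) i)
      = fun _ : ℝ => F z i := by
    ext s
    refine hdep i hi _ _ fun l hl => ?_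
    have hlj : l ≠ j := by
      intro hlj
      rw [hlj] at hl
      omega
    simp [Pi.single_apply, hlj.symm]
  rw [hconst] at hline
  have hzero := (hasDerivAt_const (0:ℝ) (F z i)).unique hline
  have hsum : (∑ l, (Pi.single j 1 : Fin N → ℝ) l
      * fderiv ℝ F (z + (0:ℝ) • (Pi.single j 1 : Fin N → ℝ)) (Pi.single l 1) i)
      = fderiv ℝ F z (Pi.single j 1) i := by
    rw [Finset.sum_eq_single j]
    · simp
    · intro l _ hlj
      simp [Pi.single_apply, hlj]
    · simp
  rw [hsum] at hzero
  exact hzero.symm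

end stmt15helpers

section stmt15equil

open Set

private lemma ub_one {n N : ℕ} (Df : Matrix (Fin N) (Fin N) ℝ)
    (F H : (Fin N → ℝ) → (Fin N → ℝ)) (i : Fin N) (hi : (i : ℕ) < n) :
    uboundGen n Df F H i = 1 := by
  unfold uboundGen
  rw [if_pos hi]

private lemma equil_zero {n N : ℕ} (hn : 0 < n) {Df : Matrix (Fin N) (Fin N) ℝ}
    {F H : (Fin N → ℝ) → (Fin N → ℝ)} (hgen : GenHyp n Df F H)
    (zs : Fin N → ℝ) (hzs : zs ∈ DbarGen n Df F H) (hnot : zs ∉ DintGen n Df F H)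
    (heq : Ggen n Df F H zs = 0) : zs = 0 := by
  obtain ⟨E, hEne, hEconn, hEpos⟩ := hgen.edgeHyp
  have hG : ∀ i, Ggen n Df F H zs i = 0 := fun i => congrFun heq i
  have hzs0 : ∀ i, 0 ≤ zs i := fun i => (hzs i).1
  have hzsu : ∀ i, zs i ≤ uboundGen n Df F H i := fun i => (hzs i).2
  have hzs1 : ∀ i : Fin N, (i : ℕ) < n → zs i ≤ 1 := fun i hi =>
    (ub_one Df F H i hi) ▸ hzsu i
  have hno1 : ∀ i : Fin N, (i : ℕ) < n → zs i ≠ 1 := by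
    intro i hi h1
    have h := hG i
    unfold Ggen at h
    rw [if_pos hi, h1] at h
    have := hgen.dPos i
    nlinarith
  have hFH0 : ∀ i, zs i = 0 → F zs i = 0 := by
    intro i h0
    have h := hG i
    unfold Ggen at h
    have hFn : 0 ≤ F zs i := nonneg_of_partials hgen.fSmooth hgen.fMono hgen.fZero hzs0 i
    have hHn : 0 ≤ H zs i := nonneg_of_partials hgen.hSmooth hgen.hMono hgen.hZero hzs0 i
    by_cases hi : (i : ℕ) < n
    · rw [if_pos hi, h0] at h
      nlinarith
    · rw [if_neg hi, h0] at h
      nlinarith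
  have hprop : ∀ i j : Fin N, zs i = 0 → (i, j) ∈ E → zs j = 0 := by
    intro i j h0 hij
    by_contra hne
    have hjpos : 0 < zs j := lt_of_le_of_ne (hzs0 j) (Ne.symm hne)
    have hlt : F 0 i < F zs i :=
      strict_mono_of_partials hgen.fSmooth hgen.fMono (fun l => hzs0 l) i j
        (by simpa using hjpos) (fun p => hEpos p (i, j) hij)
    rw [hgen.fZero, hFH0 i h0] at hlt
    simpa using hlt
  have hnotc : ∃ i₀, ¬(0 < zs i₀ ∧ zs i₀ < uboundGen n Df F H i₀) := by
    by_contra hall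
    push_neg at hall
    exact hnot fun i => ⟨(hall i).1, (hall i).2⟩
  obtain ⟨i₀, hi₀⟩ := hnotc
  rcases not_and_or.mp hi₀ with hlow | hupp
  · have h0 : zs i₀ = 0 := le_antisymm (not_lt.mp hlow) (hzs0 i₀)
    funext j
    rw [Pi.zero_apply]
    by_cases hji : j = i₀
    · rw [hji]
      exact h0
    obtain ⟨r, k, hk0, hkr, hke⟩ := hEconn i₀ j fun hh => hji hh.symm
    have hpath : ∀ s, s ≤ r → zs (k s) = 0 := by
      intro s
      induction s with
      | zero => intro _; rw [hk0]; exact h0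
      | succ s ih => intro hs; exact hprop _ _ (ih (by omega)) (hke s (by omega))
    rw [← hkr]
    exact hpath r le_rfl
  · have hu : zs i₀ = uboundGen n Df F H i₀ := le_antisymm (hzsu i₀) (not_lt.mp hupp)
    by_cases hi₀n : (i₀ : ℕ) < n
    · exact absurd (hu.trans (ub_one Df F H i₀ hi₀n)) (hno1 i₀ hi₀n)
    push_neg at hi₀n
    exfalso
    have hDfu : Df i₀ i₀ * uboundGen n Df F H i₀ = F (onevec n) i₀ + H (onevec n) i₀ := by
      unfold uboundGen
      rw [if_neg (by omega)]
      field_simp [(hgen.dPos i₀).ne']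
    have h := hG i₀
    unfold Ggen at h
    rw [if_neg (by omega)] at h
    have hsum : F zs i₀ + H zs i₀ = F (onevec n) i₀ + H (onevec n) i₀ := by
      rw [← hDfu, ← hu]
      linarith
    set zh : Fin N → ℝ := fun j => if (j : ℕ) < n then zs j else 0 with hzh
    have hFz : F zs i₀ = F zh i₀ := hgen.fDep i₀ hi₀n zs zh fun j hj => by simp [hzh, hj]
    have hHz : H zs i₀ = H zh i₀ := hgen.hDep i₀ hi₀n zs zh fun j hj => by simp [hzh, hj]
    have hle : ∀ j, zh j ≤ onevec n j := by
      intro j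
      by_cases hjn : (j : ℕ) < n
      · simpa [hzh, onevec, hjn] using hzs1 j hjn
      · simp [hzh, onevec, hjn]
    have hFle : F zh i₀ ≤ F (onevec n) i₀ := mono_of_partials hgen.fSmooth hgen.fMono hle i₀
    have hHle : H zh i₀ ≤ H (onevec n) i₀ := mono_of_partials hgen.hSmooth hgen.hMono hle i₀
    have hFeq : F zh i₀ = F (onevec n) i₀ := by
      rw [hFz, hHz] at hsum
      linarith
    have hj' : ∃ j' : Fin N, i₀ ≠ j' := by
      refine ⟨⟨0, Nat.lt_of_le_of_lt (Nat.zero_le _) i₀.isLt⟩, Fin.ne_of_val_ne ?_⟩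
      simp only []
      omega
    obtain ⟨j', hji'⟩ := hj'
    obtain ⟨r, k, hk0, hkr, hke⟩ := hEconn i₀ j' hji'
    have hr : 0 < r := by
      rcases Nat.eq_zero_or_pos r with h0 | h
      · exfalso
        apply hji'
        rw [← hk0, ← hkr, h0]
      · exact h
    have hedge : (i₀, k 1) ∈ E := by
      rw [← hk0]
      exact hke 0 hr
    have hpos : ∀ p, 0 < fderiv ℝ F p (Pi.single (k 1) 1) i₀ := fun p => hEpos p (i₀, k 1) hedge
    have hj₀n : ((k 1 : Fin N) : ℕ) < n := by
      by_contra hc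
      push_neg at hc
      have := tail_partial_zero hgen.fSmooth hgen.fDep hi₀n hc zh
      linarith [hpos zh]
    have hj₀1 : zs (k 1) = 1 := by
      by_contra hc
      have hlt : zh (k 1) < onevec n (k 1) := by
        simp only [hzh, onevec, if_pos hj₀n]
        exact lt_of_le_of_ne (hzs1 (k 1) hj₀n) hc
      exact absurd hFeq
        (ne_of_lt (strict_mono_of_partials hgen.fSmooth hgen.fMono hle i₀ (k 1) hlt hpos))
    exact hno1 (k 1) hj₀n hj₀1

end stmt15equil

section stmt15dint

open Set

private lemma pos_of_deriv_ge {f g : ℝ → ℝ} {K t : ℝ} (ht : 0 ≤ t)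
    (hf : ContinuousOn f (Icc 0 t))
    (hd : ∀ s ∈ Ioo (0:ℝ) t, HasDerivAt f (g s) s)
    (hK : ∀ s ∈ Ioo (0:ℝ) t, -(K * f s) ≤ g s)
    (h0 : 0 < f 0) : 0 < f t := by
  rcases eq_or_lt_of_le ht with rfl | htpos
  · exact h0
  set u : ℝ → ℝ := fun s => Real.exp (K * s) * f s with hu
  have hud : ∀ s ∈ Ioo (0:ℝ) t, HasDerivAt u
      (K * Real.exp (K * s) * f s + Real.exp (K * s) * g s) s := by
    intro s hs
    have he : HasDerivAt (fun s : ℝ => Real.exp (K * s)) (K * Real.exp (K * s)) s := by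
      simpa [mul_comm, Function.comp_def] using (Real.hasDerivAt_exp (K * s)).comp s
        ((hasDerivAt_id s).const_mul K)
    exact he.mul (hd s hs)
  have hcu : ContinuousOn u (Icc 0 t) :=
    ((Real.continuous_exp.comp (continuous_const.mul continuous_id)).continuousOn).mul hf
  have humono : MonotoneOn u (Icc 0 t) := by
    apply monotoneOn_of_deriv_nonneg (convex_Icc 0 t) hcu
    · rw [interior_Icc]
      exact fun s hs => ((hud s hs).differentiableAt).differentiableWithinAt
    · rw [interior_Icc]
      intro s hs
      rw [(hud s hs).deriv]
      have h1 := hK s hs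
      have h2 := Real.exp_pos (K * s)
      nlinarith
  have h01 : u 0 ≤ u t := humono (by constructor <;> norm_num [ht])
    (by constructor <;> norm_num [ht]) ht
  have hu0 : u 0 = f 0 := by simp [hu]
  have hut : u t = Real.exp (K * t) * f t := rfl
  rw [hu0, hut] at h01
  have hexp := Real.exp_pos (K * t)
  by_contra hft
  push_neg at hft
  nlinarith [h01, h0, hexp, hft]

private lemma tail_le_top {n N : ℕ} {F : (Fin N → ℝ) → (Fin N → ℝ)} (hF : ContDiff ℝ 1 F)
    (mono : ∀ (z : Fin N → ℝ) (i j : Fin N), 0 ≤ fderiv ℝ F z (Pi.single j 1) i)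
    (hdep : ∀ i : Fin N, n ≤ (i : ℕ) → ∀ z z' : Fin N → ℝ,
      (∀ j : Fin N, (j : ℕ) < n → z j = z' j) → F z i = F z' i)
    {i : Fin N} (hi : n ≤ (i : ℕ)) {z : Fin N → ℝ}
    (hz1 : ∀ j : Fin N, (j : ℕ) < n → z j ≤ 1) : F z i ≤ F (onevec n) i := by
  set zh : Fin N → ℝ := fun j => if (j : ℕ) < n then z j else 0 with hzh
  have heq : F z i = F zh i := hdep i hi z zh fun j hj => by simp [hzh, hj]
  rw [heq]
  apply mono_of_partials hF mono _ i
  intro j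
  by_cases hjn : (j : ℕ) < n
  · simpa [hzh, onevec, hjn] using hz1 j hjn
  · simp [hzh, onevec, hjn]

private lemma dint_invariant {n N : ℕ} {Df : Matrix (Fin N) (Fin N) ℝ}
    {F H : (Fin N → ℝ) → (Fin N → ℝ)} (hgen : GenHyp n Df F H)
    (z : ℝ → Fin N → ℝ) (hz : IsSolution (Ggen n Df F H) z)
    (hbar : ∀ s : ℝ, 0 ≤ s → z s ∈ DbarGen n Df F H)
    (hz0 : z 0 ∈ DintGen n Df F H) : ∀ t : ℝ, 0 ≤ t → z t ∈ DintGen n Df F H := by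
  intro t ht
  have hcd : ∀ (i : Fin N) (s : ℝ), 0 ≤ s →
      HasDerivAt (fun s' => z s' i) (Ggen n Df F H (z s) i) s := fun i s hs =>
    hasDerivAt_coord (hz s hs) i
  have hcont : ∀ i : Fin N, ContinuousOn (fun s => z s i) (Icc 0 t) := fun i s hs =>
    ((hcd i s hs.1).continuousAt).continuousWithinAt
  have hFnn : ∀ s ∈ Ioo (0:ℝ) t, ∀ i, 0 ≤ F (z s) i + H (z s) i := by
    intro s hs i
    have h0 := fun j => (hbar s hs.1.le j).1
    exact add_nonneg (nonneg_of_partials hgen.fSmooth hgen.fMono hgen.fZero h0 i)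
      (nonneg_of_partials hgen.hSmooth hgen.hMono hgen.hZero h0 i)
  intro i
  constructor
  · -- 0 < z t i
    refine pos_of_deriv_ge (f := fun s => z s i) (g := fun s => Ggen n Df F H (z s) i)
      (K := Df i i) ht (hcont i) (fun s hs => hcd i s hs.1.le) ?_ (hz0 i).1
    intro s hs
    have hFH := hFnn s hs i
    have hzi0 := (hbar s hs.1.le i).1
    have hzi1 : (i : ℕ) < n → z s i ≤ 1 := fun hi =>
      (ub_one Df F H i hi) ▸ (hbar s hs.1.le i).2
    by_cases hi : (i : ℕ) < n
    · simp only [Ggen, if_pos hi]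
      have h1 : 0 ≤ (1 - z s i) * (F (z s) i + H (z s) i) :=
        mul_nonneg (by linarith [hzi1 hi]) hFH
      linarith
    · simp only [Ggen, if_neg hi]
      linarith
  · -- z t i < ubound
    by_cases hi : (i : ℕ) < n
    · rw [ub_one Df F H i hi]
      have hub0 : z 0 i < 1 := (ub_one Df F H i hi) ▸ (hz0 i).2
      set C : ℝ := F (uboundGen n Df F H) i + H (uboundGen n Df F H) i with hC
      have key : 0 < 1 - z t i := by
        refine pos_of_deriv_ge (f := fun s => 1 - z s i)
          (g := fun s => -(Ggen n Df F H (z s) i)) (K := C) ht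
          ((continuousOn_const).sub (hcont i)) (fun s hs => ((hcd i s hs.1.le).const_sub 1))
          ?_ (by simpa using hub0)
        intro s hs
        have hzi0 := (hbar s hs.1.le i).1
        have hzi1 : z s i ≤ 1 := (ub_one Df F H i hi) ▸ (hbar s hs.1.le i).2
        have hPle : F (z s) i + H (z s) i ≤ C := by
          rw [hC]
          have hle : ∀ j, z s j ≤ uboundGen n Df F H j := fun j => (hbar s hs.1.le j).2
          exact add_le_add (mono_of_partials hgen.fSmooth hgen.fMono hle i)
            (mono_of_partials hgen.hSmooth hgen.hMono hle i)
        simp only [Ggen, if_pos hi]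
        have hd := (hgen.dPos i).le
        have h2 : (1 - z s i) * (F (z s) i + H (z s) i) ≤ (1 - z s i) * C :=
          mul_le_mul_of_nonneg_left hPle (by linarith)
        nlinarith
      linarith
    · push_neg at hi
      have hDfu : Df i i * uboundGen n Df F H i = F (onevec n) i + H (onevec n) i := by
        unfold uboundGen
        rw [if_neg (by omega)]
        field_simp [(hgen.dPos i).ne']
      have key : 0 < uboundGen n Df F H i - z t i := by
        refine pos_of_deriv_ge (f := fun s => uboundGen n Df F H i - z s i)
          (g := fun s => -(Ggen n Df F H (z s) i)) (K := Df i i) ht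
          ((continuousOn_const).sub (hcont i))
          (fun s hs => ((hcd i s hs.1.le).const_sub _)) ?_ (by show (0:ℝ) < uboundGen n Df F H i - z 0 i; linarith [(hz0 i).2])
        intro s hs
        have hz1 : ∀ j : Fin N, (j : ℕ) < n → z s j ≤ 1 := fun j hj =>
          (ub_one Df F H j hj) ▸ (hbar s hs.1.le j).2
        have hPle : F (z s) i + H (z s) i ≤ F (onevec n) i + H (onevec n) i :=
          add_le_add (tail_le_top hgen.fSmooth hgen.fMono hgen.fDep hi hz1)
            (tail_le_top hgen.hSmooth hgen.hMono hgen.hDep hi hz1)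
        simp only [Ggen, if_neg (show ¬((i:ℕ) < n) by omega)]
        nlinarith [hDfu]
      linarith

end stmt15dint

section stmt15dbar

open Set Filter Topology

private lemma dbar_invariant {n N : ℕ} {Df : Matrix (Fin N) (Fin N) ℝ}
    {F H : (Fin N → ℝ) → (Fin N → ℝ)} (hgen : GenHyp n Df F H)
    (z : ℝ → Fin N → ℝ) (hz : IsSolution (Ggen n Df F H) z)
    (hz0 : z 0 ∈ DbarGen n Df F H) : ∀ t : ℝ, 0 ≤ t → z t ∈ DbarGen n Df F H := by
  classical
  set ub : Fin N → ℝ := uboundGen n Df F H with hubdef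
  have honv0 : ∀ j : Fin N, (0:ℝ) ≤ onevec n j := by
    intro j
    unfold onevec
    split <;> norm_num
  have hub0 : ∀ i, 0 ≤ ub i := by
    intro i
    rw [hubdef]
    unfold uboundGen
    split
    · norm_num
    · refine div_nonneg (add_nonneg ?_ ?_) (hgen.dPos i).le
      · exact nonneg_of_partials hgen.fSmooth hgen.fMono hgen.fZero honv0 i
      · exact nonneg_of_partials hgen.hSmooth hgen.hMono hgen.hZero honv0 i
  have hDfu : ∀ i : Fin N, ¬((i:ℕ) < n) → Df i i * ub i = F (onevec n) i + H (onevec n) i := by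
    intro i hi
    rw [hubdef]
    unfold uboundGen
    rw [if_neg hi]
    field_simp [(hgen.dPos i).ne']
  -- the tube
  set lo : Fin N → ℝ := fun _ => (-1 : ℝ) with hlo
  set hi' : Fin N → ℝ := fun i => ub i + 1 with hhi
  set tube : Set (Fin N → ℝ) := Icc lo hi' with htube
  have htube_mem : ∀ w : Fin N → ℝ, w ∈ tube ↔ ∀ i, -1 ≤ w i ∧ w i ≤ ub i + 1 := by
    intro w
    rw [htube]
    constructor
    · intro hw i
      exact ⟨hw.1 i, hw.2 i⟩
    · intro hw
      exact ⟨fun i => (hw i).1, fun i => (hw i).2⟩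
  have hDbar_eq : DbarGen n Df F H = Icc (0 : Fin N → ℝ) ub := by
    ext w
    constructor
    · intro hw
      exact ⟨fun i => (hw i).1, fun i => (hw i).2⟩
    · intro hw i
      exact ⟨hw.1 i, hw.2 i⟩
  have htube_sub : DbarGen n Df F H ⊆ tube := by
    intro w hw
    rw [htube_mem]
    intro i
    exact ⟨by linarith [(hw i).1], by linarith [(hw i).2]⟩
  have htube_cpt : IsCompact tube := isCompact_Icc
  have htube_conv : Convex ℝ tube := convex_Icc _ _
  have htube_ne : tube.Nonempty := by
    refine ⟨fun _ => 0, ?_⟩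
    rw [htube_mem]
    intro i
    constructor
    · norm_num
    · linarith [hub0 i]
  -- the Lipschitz bound M
  set Φ : (Fin N → ℝ) → ℝ := fun p => ∑ i, ∑ j,
    (|fderiv ℝ F p (Pi.single j 1) i| + |fderiv ℝ H p (Pi.single j 1) i|) with hΦ
  have hfc : ∀ (G : (Fin N → ℝ) → (Fin N → ℝ)), ContDiff ℝ 1 G → ∀ i j : Fin N,
      Continuous fun p => fderiv ℝ G p (Pi.single j 1) i := by
    intro G hG i j
    exact (continuous_apply i).comp
      (((hG.continuous_fderiv one_ne_zero).clm_apply continuous_const))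
  have hΦc : Continuous Φ := by
    rw [hΦ]
    refine continuous_finset_sum _ fun i _ => continuous_finset_sum _ fun j _ => ?_
    exact ((hfc F hgen.fSmooth i j).abs).add ((hfc H hgen.hSmooth i j).abs)
  obtain ⟨pM, hpMmem, hmax⟩ := htube_cpt.exists_isMaxOn htube_ne hΦc.continuousOn
  set M : ℝ := Φ pM with hM
  have hM0 : 0 ≤ M := by
    rw [hM, hΦ]
    exact Finset.sum_nonneg fun i _ => Finset.sum_nonneg fun j _ =>
      add_nonneg (abs_nonneg _) (abs_nonneg _)
  have hMb : ∀ p ∈ tube, ∀ i j : Fin N,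
      |fderiv ℝ F p (Pi.single j 1) i| ≤ M ∧ |fderiv ℝ H p (Pi.single j 1) i| ≤ M := by
    intro p hp i j
    have h1 : Φ p ≤ M := hmax hp
    have h2 : |fderiv ℝ F p (Pi.single j 1) i| + |fderiv ℝ H p (Pi.single j 1) i| ≤ Φ p := by
      rw [hΦ]
      calc |fderiv ℝ F p (Pi.single j 1) i| + |fderiv ℝ H p (Pi.single j 1) i|
          ≤ ∑ j', (|fderiv ℝ F p (Pi.single j' 1) i| + |fderiv ℝ H p (Pi.single j' 1) i|) :=
            Finset.single_le_sum (f := fun j' =>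
              (|fderiv ℝ F p (Pi.single j' 1) i| + |fderiv ℝ H p (Pi.single j' 1) i|))
              (fun j' _ => add_nonneg (abs_nonneg _) (abs_nonneg _)) (Finset.mem_univ j)
        _ ≤ ∑ i', ∑ j', (|fderiv ℝ F p (Pi.single j' 1) i'|
              + |fderiv ℝ H p (Pi.single j' 1) i'|) :=
            Finset.single_le_sum (f := fun i' => ∑ j',
              (|fderiv ℝ F p (Pi.single j' 1) i'| + |fderiv ℝ H p (Pi.single j' 1) i'|))
              (fun i' _ => Finset.sum_nonneg fun j' _ =>
                add_nonneg (abs_nonneg _) (abs_nonneg _)) (Finset.mem_univ i)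
    exact ⟨by linarith [abs_nonneg (fderiv ℝ H p (Pi.single j 1) i)],
      by linarith [abs_nonneg (fderiv ℝ F p (Pi.single j 1) i)]⟩
  -- clamp, V, W
  set cl : (Fin N → ℝ) → (Fin N → ℝ) := fun w j => max 0 (min (w j) (ub j)) with hcl
  set V : (Fin N → ℝ) → ℝ := fun w => ∑ j, (max 0 (-(w j)) + max 0 (w j - ub j)) with hV
  set W : (Fin N → ℝ) → ℝ := fun w => ∑ j, (max 0 (-(w j)) ^ 2 + max 0 (w j - ub j) ^ 2)
    with hW
  have hV0 : ∀ w, 0 ≤ V w := fun w => Finset.sum_nonneg fun j _ =>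
    add_nonneg (le_max_left _ _) (le_max_left _ _)
  have hW0 : ∀ w, 0 ≤ W w := fun w => Finset.sum_nonneg fun j _ =>
    add_nonneg (sq_nonneg _) (sq_nonneg _)
  have hVterm : ∀ w (j : Fin N), max 0 (-(w j)) + max 0 (w j - ub j) ≤ V w := by
    intro w j
    exact Finset.single_le_sum (f := fun j' => max 0 (-(w j')) + max 0 (w j' - ub j'))
      (fun j' _ => add_nonneg (le_max_left _ _) (le_max_left _ _)) (Finset.mem_univ j)
  have hcl_mem : ∀ w, cl w ∈ DbarGen n Df F H := by
    intro w j
    refine ⟨le_max_left _ _, ?_⟩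
    exact max_le (hub0 j) (min_le_right _ _)
  have hVcl : ∀ w, (∑ j, |w j - cl w j|) = V w := by
    intro w
    rw [hV]
    refine Finset.sum_congr rfl fun j _ => ?_
    rcases lt_or_ge (w j) 0 with h0 | h0
    · have h1 : cl w j = 0 := by
        rw [hcl]
        simp only []
        rw [min_eq_left (by linarith [hub0 j]), max_eq_left h0.le]
      rw [h1, max_eq_right (by linarith), max_eq_left (by linarith [hub0 j])]
      rw [sub_zero, abs_of_neg h0]
      ring
    · rcases le_or_gt (w j) (ub j) with h2 | h2
      · have h1 : cl w j = w j := by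
          rw [hcl]
          simp only []
          rw [min_eq_left h2, max_eq_right h0]
        rw [h1, max_eq_left (by linarith), max_eq_left (by linarith)]
        simp
      · have h1 : cl w j = ub j := by
          rw [hcl]
          simp only []
          rw [min_eq_right h2.le, max_eq_right (hub0 j)]
        rw [h1, max_eq_left (by linarith), max_eq_right (by linarith)]
        rw [abs_of_pos (by linarith)]
        ring
  have hVsq : ∀ w, V w ^ 2 ≤ (2 * (N:ℝ)) * W w := by
    intro w
    rw [hV, hW]
    calc (∑ j, (max 0 (-(w j)) + max 0 (w j - ub j))) ^ 2
        ≤ (Finset.univ.card : ℝ) * ∑ j, (max 0 (-(w j)) + max 0 (w j - ub j)) ^ 2 := by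
          exact sq_sum_le_card_mul_sum_sq
      _ ≤ (N:ℝ) * ∑ j, 2 * (max 0 (-(w j)) ^ 2 + max 0 (w j - ub j) ^ 2) := by
          rw [Finset.card_univ, Fintype.card_fin]
          refine mul_le_mul_of_nonneg_left (Finset.sum_le_sum fun j _ => ?_) (Nat.cast_nonneg N)
          nlinarith [sq_nonneg (max 0 (-(w j)) - max 0 (w j - ub j))]
      _ = (2 * (N:ℝ)) * ∑ j, (max 0 (-(w j)) ^ 2 + max 0 (w j - ub j) ^ 2) := by
          rw [← Finset.mul_sum]
          ring
  have hWzero : ∀ w, W w = 0 ↔ w ∈ DbarGen n Df F H := by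
    intro w
    constructor
    · intro h
      intro j
      simp only [hW] at h
      have hterm := (Finset.sum_eq_zero_iff_of_nonneg fun j' _ =>
        add_nonneg (sq_nonneg (max 0 (-(w j')))) (sq_nonneg (max 0 (w j' - ub j')))).mp h
        j (Finset.mem_univ j)
      have hsa : (max 0 (-(w j))) ^ 2 = 0 := by
        nlinarith [sq_nonneg (max 0 (-(w j))), sq_nonneg (max 0 (w j - ub j))]
      have hsb : (max 0 (w j - ub j)) ^ 2 = 0 := by
        nlinarith [sq_nonneg (max 0 (-(w j))), sq_nonneg (max 0 (w j - ub j))]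
      have ha : max 0 (-(w j)) = 0 := by
        have := sq_eq_zero_iff.mp hsa
        exact this
      have hb : max 0 (w j - ub j) = 0 := by
        have := sq_eq_zero_iff.mp hsb
        exact this
      have ha' : -(w j) ≤ 0 := by
        by_contra hc
        push_neg at hc
        rw [max_eq_right hc.le] at ha
        linarith
      have hb' : w j - ub j ≤ 0 := by
        by_contra hc
        push_neg at hc
        rw [max_eq_right hc.le] at hb
        linarith
      exact ⟨by linarith, by linarith⟩
    · intro hmem
      simp only [hW]
      refine Finset.sum_eq_zero fun j _ => ?_
      rw [max_eq_left (by linarith [(hmem j).1]), max_eq_left (by linarith [(hmem j).2])]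
      norm_num
  -- Lipschitz estimate
  have hlip : ∀ w ∈ tube, ∀ i,
      |F w i - F (cl w) i| ≤ M * V w ∧ |H w i - H (cl w) i| ≤ M * V w := by
    intro w hw i
    have hseg : ∀ s ∈ Icc (0:ℝ) 1, cl w + s • (w - cl w) ∈ tube := by
      intro s hs
      have hcomb : cl w + s • (w - cl w) = (1 - s) • cl w + s • w := by
        ext j
        simp only [Pi.add_apply, Pi.smul_apply, Pi.sub_apply, smul_eq_mul]
        ring
      rw [hcomb]
      exact htube_conv (htube_sub (hcl_mem w)) hw (by linarith [hs.1, hs.2])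
        hs.1 (by ring)
    constructor
    · have hle := lip_of_partials hgen.fSmooth (a := cl w) (b := w) i
        (fun s hs j => (hMb _ (hseg s hs) i j).1)
      rw [show (∑ j, |w j - cl w j|) = V w from hVcl w] at hle
      exact hle
    · have hle := lip_of_partials hgen.hSmooth (a := cl w) (b := w) i
        (fun s hs j => (hMb _ (hseg s hs) i j).2)
      rw [show (∑ j, |w j - cl w j|) = V w from hVcl w] at hle
      exact hle
  -- the key inward estimates
  have key : ∀ w ∈ tube, ∀ i : Fin N,
      (w i ≤ 0 → -(Ggen n Df F H w i) ≤ (4 * M + 1) * V w) ∧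
      (ub i ≤ w i → Ggen n Df F H w i ≤ (4 * M + 1) * V w) := by
    intro w hw i
    have hwi := (htube_mem w).mp hw i
    have hPF : -(M * V w) ≤ F w i := by
      have h1 := (hlip w hw i).1
      have h2 : 0 ≤ F (cl w) i :=
        nonneg_of_partials hgen.fSmooth hgen.fMono hgen.fZero (fun j => (hcl_mem w j).1) i
      have := abs_le.mp h1
      linarith [this.1]
    have hPH : -(M * V w) ≤ H w i := by
      have h1 := (hlip w hw i).2
      have h2 : 0 ≤ H (cl w) i :=
        nonneg_of_partials hgen.hSmooth hgen.hMono hgen.hZero (fun j => (hcl_mem w j).1) i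
      have := abs_le.mp h1
      linarith [this.1]
    have hMV0 : 0 ≤ M * V w := mul_nonneg hM0 (hV0 w)
    constructor
    · intro hwle
      by_cases hin : (i:ℕ) < n
      · simp only [Ggen, if_pos hin]
        have hDf : Df i i * w i ≤ 0 := mul_nonpos_of_nonneg_of_nonpos (hgen.dPos i).le hwle
        have hfac : (1:ℝ) ≤ 1 - w i := by linarith
        have hfac2 : 1 - w i ≤ 2 := by linarith [hwi.1]
        have hP : -(2 * (M * V w)) ≤ F w i + H w i := by linarith
        have h3 : -((1 - w i) * (F w i + H w i)) ≤ (1 - w i) * (2 * (M * V w)) := by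
          nlinarith
        have h4 : (1 - w i) * (2 * (M * V w)) ≤ 2 * (2 * (M * V w)) :=
          mul_le_mul_of_nonneg_right hfac2 (by linarith)
        linarith [hV0 w]
      · simp only [Ggen, if_neg hin]
        have hDf : Df i i * w i ≤ 0 := mul_nonpos_of_nonneg_of_nonpos (hgen.dPos i).le hwle
        linarith [hV0 w, hMV0, hPF, hPH]
    · intro hwge
      by_cases hin : (i:ℕ) < n
      · simp only [Ggen, if_pos hin]
        have hub1 : ub i = 1 := ub_one Df F H i hin
        have hDf : 0 ≤ Df i i * w i :=
          mul_nonneg (hgen.dPos i).le (by linarith [hub0 i])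
        have hfac : 1 - w i ≤ 0 := by linarith [hub0 i, hwge, hub1]
        have hfac2 : w i - 1 ≤ 1 := by linarith [hwi.2, hub1]
        have hP : -(2 * (M * V w)) ≤ F w i + H w i := by linarith
        have h3 : (1 - w i) * (F w i + H w i) ≤ (1 - w i) * (-(2 * (M * V w))) :=
          mul_le_mul_of_nonpos_left hP hfac
        have h4 : (w i - 1) * (2 * (M * V w)) ≤ 1 * (2 * (M * V w)) :=
          mul_le_mul_of_nonneg_right hfac2 (by linarith)
        have h5 : (1 - w i) * (-(2 * (M * V w))) = (w i - 1) * (2 * (M * V w)) := by ring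
        linarith [hV0 w, hMV0]
      · simp only [Ggen, if_neg hin]
        have hcl1 : ∀ j : Fin N, (j:ℕ) < n → cl w j ≤ 1 := by
          intro j hj
          have := (hcl_mem w j).2
          rwa [ub_one Df F H j hj] at this
        have hFcl : F (cl w) i ≤ F (onevec n) i :=
          tail_le_top hgen.fSmooth hgen.fMono hgen.fDep (by omega) hcl1
        have hHcl : H (cl w) i ≤ H (onevec n) i :=
          tail_le_top hgen.hSmooth hgen.hMono hgen.hDep (by omega) hcl1
        have hF2 := abs_le.mp (hlip w hw i).1
        have hH2 := abs_le.mp (hlip w hw i).2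
        have hDf : Df i i * ub i ≤ Df i i * w i :=
          mul_le_mul_of_nonneg_left hwge (hgen.dPos i).le
        have hDfub := hDfu i hin
        linarith [hV0 w, hMV0, hF2.2, hH2.2, hFcl, hHcl, hDf, hDfub]
  -- derivative of W along the solution
  set K2 : ℝ := (4 * M + 1) * (4 * (N:ℝ)) + 1 with hK2
  have hWd : ∀ s : ℝ, 0 ≤ s → HasDerivAt (fun τ => W (z τ))
      (∑ i, ((-2 * max 0 (-(z s i))) * Ggen n Df F H (z s) i
        + (2 * max 0 (z s i - ub i)) * Ggen n Df F H (z s) i)) s := by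
    intro s hs
    have hcoord : ∀ i : Fin N, HasDerivAt (fun τ => z τ i) (Ggen n Df F H (z s) i) s :=
      fun i => hasDerivAt_coord (hz s hs) i
    have hterm : ∀ i : Fin N, HasDerivAt
        (fun τ => max 0 (-(z τ i)) ^ 2 + max 0 (z τ i - ub i) ^ 2)
        ((-2 * max 0 (-(z s i))) * Ggen n Df F H (z s) i
          + (2 * max 0 (z s i - ub i)) * Ggen n Df F H (z s) i) s := by
      intro i
      have h1 := (negpart_sq_hasDerivAt (z s i)).comp s (hcoord i)
      have h2 := (pospart_sq_hasDerivAt (ub i) (z s i)).comp s (hcoord i)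
      have h12 := h1.add h2
      exact h12
    have hsumd := HasDerivAt.fun_sum (fun i (_ : i ∈ Finset.univ) => hterm i)
    have heq : (fun τ => W (z τ))
        = fun τ => ∑ i, (max 0 (-(z τ i)) ^ 2 + max 0 (z τ i - ub i) ^ 2) := by
      ext τ
      simp [hW]
    rw [heq]
    exact hsumd
  -- Gronwall-type estimate on intervals where `z` stays in the tube
  have gron : ∀ T : ℝ, 0 ≤ T → (∀ s ∈ Icc (0:ℝ) T, z s ∈ tube) →
      ∀ s ∈ Icc (0:ℝ) T, W (z s) = 0 := by
    intro T hT htb s hsmem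
    have hzc : ContinuousOn (fun τ => W (z τ)) (Icc 0 T) := fun τ hτ =>
      ((hWd τ hτ.1).continuousAt).continuousWithinAt
    set u : ℝ → ℝ := fun τ => W (z τ) * Real.exp (-(K2 * τ)) with hu
    have hexpd : ∀ τ : ℝ, HasDerivAt (fun τ : ℝ => Real.exp (-(K2 * τ)))
        (Real.exp (-(K2 * τ)) * (-K2)) τ := by
      intro τ
      have hin : HasDerivAt (fun τ : ℝ => -(K2 * τ)) (-K2) τ := by
        exact ((hasDerivAt_id τ).const_mul K2).neg.congr_deriv (by ring)
      simpa [mul_comm, Function.comp_def] using (Real.hasDerivAt_exp (-(K2 * τ))).comp τ hin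
    have hucont : ContinuousOn u (Icc 0 T) := hzc.mul ((Real.continuous_exp.comp
      ((continuous_const.mul continuous_id).neg)).continuousOn)
    have hanti : AntitoneOn u (Icc 0 T) := by
      apply antitoneOn_of_deriv_nonpos (convex_Icc 0 T) hucont
      · rw [interior_Icc]
        intro τ hτ
        exact (((hWd τ hτ.1.le).mul (hexpd τ)).differentiableAt).differentiableWithinAt
      · rw [interior_Icc]
        intro τ hτ
        have hud : HasDerivAt u
            ((∑ i, ((-2 * max 0 (-(z τ i))) * Ggen n Df F H (z τ) i
              + (2 * max 0 (z τ i - ub i)) * Ggen n Df F H (z τ) i))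
                * Real.exp (-(K2 * τ))
              + W (z τ) * (Real.exp (-(K2 * τ)) * (-K2))) τ :=
          (hWd τ hτ.1.le).mul (hexpd τ)
        rw [hud.deriv]
        have htbτ : z τ ∈ tube := htb τ ⟨hτ.1.le, hτ.2.le⟩
        have hbnd : ∀ i : Fin N, (-2 * max 0 (-(z τ i))) * Ggen n Df F H (z τ) i
            + (2 * max 0 (z τ i - ub i)) * Ggen n Df F H (z τ) i
            ≤ 2 * ((4*M+1) * V (z τ)) * (max 0 (-(z τ i)) + max 0 (z τ i - ub i)) := by
          intro i
          have hk := key (z τ) htbτ i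
          have ha : (-2 * max 0 (-(z τ i))) * Ggen n Df F H (z τ) i
              ≤ 2 * ((4*M+1) * V (z τ)) * max 0 (-(z τ i)) := by
            rcases le_or_gt (-(z τ i)) 0 with hc | hc
            · rw [max_eq_left hc]
              simp
            · rw [max_eq_right hc.le]
              have h0 : z τ i ≤ 0 := by linarith
              have h2 : (2 * (-(z τ i))) * (-(Ggen n Df F H (z τ) i))
                  ≤ (2 * (-(z τ i))) * ((4*M+1) * V (z τ)) :=
                mul_le_mul_of_nonneg_left (hk.1 h0) (by linarith)
              linarith [h2]
          have hb : (2 * max 0 (z τ i - ub i)) * Ggen n Df F H (z τ) i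
              ≤ 2 * ((4*M+1) * V (z τ)) * max 0 (z τ i - ub i) := by
            rcases le_or_gt (z τ i - ub i) 0 with hc | hc
            · rw [max_eq_left hc]
              simp
            · rw [max_eq_right hc.le]
              have h0 : ub i ≤ z τ i := by linarith
              have h2 : (2 * (z τ i - ub i)) * (Ggen n Df F H (z τ) i)
                  ≤ (2 * (z τ i - ub i)) * ((4*M+1) * V (z τ)) :=
                mul_le_mul_of_nonneg_left (hk.2 h0) (by linarith)
              linarith [h2]
          linarith [ha, hb]
        have hsum : (∑ i, ((-2 * max 0 (-(z τ i))) * Ggen n Df F H (z τ) i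
            + (2 * max 0 (z τ i - ub i)) * Ggen n Df F H (z τ) i))
            ≤ 2 * ((4*M+1) * V (z τ)) * V (z τ) := by
          calc (∑ i, ((-2 * max 0 (-(z τ i))) * Ggen n Df F H (z τ) i
              + (2 * max 0 (z τ i - ub i)) * Ggen n Df F H (z τ) i))
              ≤ ∑ i, 2 * ((4*M+1) * V (z τ)) * (max 0 (-(z τ i)) + max 0 (z τ i - ub i)) :=
                Finset.sum_le_sum fun i _ => hbnd i
            _ = 2 * ((4*M+1) * V (z τ)) * V (z τ) := by
                rw [← Finset.mul_sum]
        have hfin : (∑ i, ((-2 * max 0 (-(z τ i))) * Ggen n Df F H (z τ) i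
            + (2 * max 0 (z τ i - ub i)) * Ggen n Df F H (z τ) i)) ≤ K2 * W (z τ) := by
          have hV2 := hVsq (z τ)
          have h4M : (0:ℝ) ≤ 2 * (4*M+1) := by linarith
          have h5 : 2 * (4*M+1) * (V (z τ) ^ 2) ≤ 2 * (4*M+1) * ((2 * (N:ℝ)) * W (z τ)) :=
            mul_le_mul_of_nonneg_left hV2 h4M
          have h6 : 2 * ((4*M+1) * V (z τ)) * V (z τ) = 2 * (4*M+1) * (V (z τ) ^ 2) := by
            ring
          rw [hK2]
          have hWnn := hW0 (z τ)
          nlinarith [hsum]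
        have hexp0 := Real.exp_pos (-(K2 * τ))
        have h7 : (∑ i, ((-2 * max 0 (-(z τ i))) * Ggen n Df F H (z τ) i
            + (2 * max 0 (z τ i - ub i)) * Ggen n Df F H (z τ) i)) * Real.exp (-(K2 * τ))
            ≤ (K2 * W (z τ)) * Real.exp (-(K2 * τ)) :=
          mul_le_mul_of_nonneg_right hfin hexp0.le
        nlinarith [h7]
    have h01 : u s ≤ u 0 := hanti ⟨le_rfl, hT⟩ hsmem hsmem.1
    have hu0 : u 0 = 0 := by
      have hWz0 : W (z 0) = 0 := (hWzero (z 0)).mpr hz0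
      simp [hu, hWz0]
    have hus : 0 ≤ u s := mul_nonneg (hW0 _) (Real.exp_pos _).le
    have husz : u s = 0 := le_antisymm (hu0 ▸ h01) hus
    have hexpn := (Real.exp_pos (-(K2 * s))).ne'
    rcases mul_eq_zero.mp husz with h | h
    · exact h
    · exact absurd h hexpn
  -- bootstrap
  intro t ht
  by_contra hbad
  set B : Set ℝ := {τ : ℝ | 0 ≤ τ ∧ z τ ∉ DbarGen n Df F H} with hB
  have hBne : B.Nonempty := ⟨t, ht, hbad⟩
  have hBbd : BddBelow B := ⟨0, fun b hb => hb.1⟩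
  set t₁ : ℝ := sInf B with ht₁
  have ht₁0 : 0 ≤ t₁ := le_csInf hBne fun b hb => hb.1
  have hbefore : ∀ s, 0 ≤ s → s < t₁ → z s ∈ DbarGen n Df F H := by
    intro s hs hst
    by_contra hc
    exact absurd (csInf_le hBbd ⟨hs, hc⟩) (not_le.mpr hst)
  have ht₁mem : z t₁ ∈ DbarGen n Df F H := by
    rcases eq_or_lt_of_le ht₁0 with h0 | hpos
    · rw [← h0]
      exact hz0
    · have hcontz : ContinuousAt z t₁ := (hz t₁ ht₁0).continuousAt
      have hclosed : IsClosed (DbarGen n Df F H) := by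
        rw [hDbar_eq]
        exact isClosed_Icc
      have htend : Filter.Tendsto z (nhdsWithin t₁ (Iio t₁)) (nhds (z t₁)) :=
        hcontz.tendsto.mono_left nhdsWithin_le_nhds
      refine hclosed.mem_of_tendsto htend ?_
      filter_upwards [Ioo_mem_nhdsLT_of_mem (show t₁ ∈ Ioc (0:ℝ) t₁ from ⟨hpos, le_rfl⟩)]
        with s hs
      exact hbefore s hs.1.le hs.2
  have hev : ∀ᶠ s in nhds t₁, z s ∈ tube := by
    have hcontz : ContinuousAt z t₁ := (hz t₁ ht₁0).continuousAt
    have hall : ∀ᶠ s in nhds t₁, ∀ i : Fin N, z s i ∈ Ioo (-1 : ℝ) (ub i + 1) := by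
      rw [eventually_all]
      intro i
      have hci : ContinuousAt (fun s => z s i) t₁ :=
        ((continuous_apply i).continuousAt).comp hcontz
      exact hci (Ioo_mem_nhds (by linarith [(ht₁mem i).1]) (by linarith [(ht₁mem i).2]))
    filter_upwards [hall] with s hs
    rw [htube_mem]
    exact fun i => ⟨(hs i).1.le, (hs i).2.le⟩
  obtain ⟨δ, hδpos, hδ⟩ := Metric.eventually_nhds_iff.mp hev
  have htubeall : ∀ s ∈ Icc (0:ℝ) (t₁ + δ/2), z s ∈ tube := by
    intro s hs
    rcases le_or_gt s t₁ with h | h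
    · rcases eq_or_lt_of_le h with he | hl
      · rw [he]
        exact htube_sub ht₁mem
      · exact htube_sub (hbefore s hs.1 hl)
    · apply hδ
      rw [Real.dist_eq, abs_of_pos (by linarith)]
      linarith [hs.2]
  have hW00 : ∀ s ∈ Icc (0:ℝ) (t₁ + δ/2), W (z s) = 0 := gron _ (by linarith) htubeall
  obtain ⟨b, hbB, hbT⟩ := exists_lt_of_csInf_lt hBne
    (show sInf B < t₁ + δ/2 by rw [← ht₁]; linarith)
  exact hbB.2 ((hWzero (z b)).mp (hW00 b ⟨hbB.1, hbT.le⟩))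

end stmt15dbar

/-- general properties of the general SIWS model:
(i) `D̄` is positively invariant; (ii) `𝐃` is positively invariant;
(iii) the origin is an equilibrium and is the only equilibrium on the
boundary of `𝐃`. -/
theorem stmt15 (n m : ℕ) (hn : 0 < n)
    (Df : Matrix (Fin (n + m)) (Fin (n + m)) ℝ)
    (F H : (Fin (n + m) → ℝ) → (Fin (n + m) → ℝ))
    (hgen : GenHyp n Df F H) :
    (∀ z : ℝ → Fin (n + m) → ℝ, IsSolution (Ggen n Df F H) z →
        z 0 ∈ DbarGen n Df F H → ∀ t : ℝ, 0 ≤ t → z t ∈ DbarGen n Df F H) ∧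
    (∀ z : ℝ → Fin (n + m) → ℝ, IsSolution (Ggen n Df F H) z →
        z 0 ∈ DintGen n Df F H → ∀ t : ℝ, 0 ≤ t → z t ∈ DintGen n Df F H) ∧
    Ggen n Df F H 0 = 0 ∧
    (∀ zs ∈ DbarGen n Df F H, zs ∉ DintGen n Df F H →
        Ggen n Df F H zs = 0 → zs = 0) := by
  refine ⟨?_, ?_, ?_, ?_⟩
  · intro z hz hz0 t ht
    exact dbar_invariant hgen z hz hz0 t ht
  · intro z hz hz0 t ht
    have hsub : z 0 ∈ DbarGen n Df F H := fun i => ⟨(hz0 i).1.le, (hz0 i).2.le⟩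
    exact dint_invariant hgen z hz (dbar_invariant hgen z hz hsub) hz0 t ht
  · funext i
    unfold Ggen
    split <;> simp [hgen.fZero, hgen.hZero]
  · intro zs hzs hnot heq
    exact equil_zero hn hgen zs hzs hnot heq
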